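/- Let w⁰: ℝ³₊ → ℝ³ be a divergence-free vector field (∂₁w⁰₁ + ∂₂w⁰₂ + ∂₃w⁰₃ = 0) and define w̃^δ by w̃^δ₁ = -w⁰₁, w̃^δ₂ = -w⁰₂, w̃^δ₃ = -w⁰₃ + (δ^{3/2} + δ^{α-1})(-D₁g(y'/δ)w⁰₁ - D₂g(y'/δ)w⁰₂), and w = w⁰ - δ^{α-5/2}w̃^δ. Then div(Bw) = 0, where B = I + δ^{α-1}B_g with B_g as above. -/

import Mathlib

open Real

/-- Lemma 3.1 (a): with `w̃^δ` and `w = w⁰ - δ^{α-5/2}w̃^δ` built from a divergence-free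
field `w⁰` on the half space, one has `div(Bw) = 0`, where
`B = I + δ^{α-1}B_g` and `B_g` has entries `-D₁g(y'/δ), -D₂g(y'/δ)` in row 3. -/
theorem stmt_5 (g : ℝ × ℝ → ℝ) (hg : ContDiff ℝ 2 g) (hg0 : ∀ p, 0 ≤ g p)
    (w0 : Fin 3 → (ℝ × ℝ × ℝ → ℝ)) (hw0 : ∀ i, ContDiff ℝ 1 (w0 i))
    (δ α : ℝ) (hδ0 : 0 < δ) (hδ1 : δ < 1) (hα : 5 / 2 < α)
    (hdiv : ∀ y : ℝ × ℝ × ℝ, 0 < y.2.2 →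
      fderiv ℝ (w0 0) y (1, 0, 0) + fderiv ℝ (w0 1) y (0, 1, 0)
        + fderiv ℝ (w0 2) y (0, 0, 1) = 0) :
    ∀ y : ℝ × ℝ × ℝ, 0 < y.2.2 →
      fderiv ℝ (fun z : ℝ × ℝ × ℝ =>
          w0 0 z - δ ^ (α - 5 / 2) * (-(w0 0 z))) y (1, 0, 0)
      + fderiv ℝ (fun z : ℝ × ℝ × ℝ =>
          w0 1 z - δ ^ (α - 5 / 2) * (-(w0 1 z))) y (0, 1, 0)
      + fderiv ℝ (fun z : ℝ × ℝ × ℝ =>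
          -(δ ^ (α - 1)) * fderiv ℝ g (δ⁻¹ • (z.1, z.2.1)) (1, 0) *
              (w0 0 z - δ ^ (α - 5 / 2) * (-(w0 0 z)))
            - δ ^ (α - 1) * fderiv ℝ g (δ⁻¹ • (z.1, z.2.1)) (0, 1) *
              (w0 1 z - δ ^ (α - 5 / 2) * (-(w0 1 z)))
            + (w0 2 z - δ ^ (α - 5 / 2) *
                (-(w0 2 z) + (δ ^ ((3:ℝ) / 2) + δ ^ (α - 1)) *
                  (-(fderiv ℝ g (δ⁻¹ • (z.1, z.2.1)) (1, 0)) * w0 0 z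
                    - fderiv ℝ g (δ⁻¹ • (z.1, z.2.1)) (0, 1) * w0 1 z)))) y (0, 0, 1)
      = 0 := by
  intro y hy
  have h1 : δ ^ (α - 5 / 2) * δ ^ ((3:ℝ) / 2) = δ ^ (α - 1) := by
    rw [← Real.rpow_add hδ0]; ring_nf
  have e0 : (fun z : ℝ × ℝ × ℝ => w0 0 z - δ ^ (α - 5 / 2) * (-(w0 0 z)))
      = fun z => (1 + δ ^ (α - 5 / 2)) * w0 0 z := by funext z; ring
  have e1 : (fun z : ℝ × ℝ × ℝ => w0 1 z - δ ^ (α - 5 / 2) * (-(w0 1 z)))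
      = fun z => (1 + δ ^ (α - 5 / 2)) * w0 1 z := by funext z; ring
  have e2 : (fun z : ℝ × ℝ × ℝ =>
          -(δ ^ (α - 1)) * fderiv ℝ g (δ⁻¹ • (z.1, z.2.1)) (1, 0) *
              (w0 0 z - δ ^ (α - 5 / 2) * (-(w0 0 z)))
            - δ ^ (α - 1) * fderiv ℝ g (δ⁻¹ • (z.1, z.2.1)) (0, 1) *
              (w0 1 z - δ ^ (α - 5 / 2) * (-(w0 1 z)))
            + (w0 2 z - δ ^ (α - 5 / 2) *
                (-(w0 2 z) + (δ ^ ((3:ℝ) / 2) + δ ^ (α - 1)) *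
                  (-(fderiv ℝ g (δ⁻¹ • (z.1, z.2.1)) (1, 0)) * w0 0 z
                    - fderiv ℝ g (δ⁻¹ • (z.1, z.2.1)) (0, 1) * w0 1 z))))
      = fun z => (1 + δ ^ (α - 5 / 2)) * w0 2 z := by
    funext z
    linear_combination (fderiv ℝ g (δ⁻¹ • (z.1, z.2.1)) (1, 0) * w0 0 z
      + fderiv ℝ g (δ⁻¹ • (z.1, z.2.1)) (0, 1) * w0 1 z) * h1
  rw [e0, e1, e2]
  have d0 := ((hw0 0).differentiable one_ne_zero) y
  have d1 := ((hw0 1).differentiable one_ne_zero) y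
  have d2 := ((hw0 2).differentiable one_ne_zero) y
  rw [fderiv_const_mul d0, fderiv_const_mul d1, fderiv_const_mul d2]
  simp only [ContinuousLinearMap.smul_apply, smul_eq_mul]
  have := hdiv y hy
  linear_combination (1 + δ ^ (α - 5 / 2)) * this
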